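/- For (v,w) ∈ ℝ² with v ≠ w, define the 2×2 matrices A = diag(w, v), B₁ = (w−v)⁻¹·[[1, 1], [−1, −1]], B₂ = (w−v)⁻¹·[[w, v], [−w, −v]], B₃ = (w−v)⁻¹·[[w², v²], [−w², −v²]], B₄ = (w−v)⁻¹·[[v w², v³], [−w³, −w v²]]. Then for all real constants c₀, c₁, c₂, c₃, c₄, the matrix-valued function M(v,w) = c₀A + c₁B₁ + c₂B₂ + c₃B₃ + c₄B₄ satisfies the 2×2 linear degeneracy criterion at every point (v,w) with v ≠ w: for k = 1, 2, Σ_{j=1}^{2} (∂f₁/∂u^j) M_{jk} + ∂f₂/∂u^k = 0, where (u¹,u²) = (v,w), f₁ = −tr M and f₂ = det M. -/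

import Mathlib

open Matrix

/-- `A = diag(w, v)`. -/
noncomputable def Amat (v w : ℝ) : Matrix (Fin 2) (Fin 2) ℝ := !![w, 0; 0, v]

/-- `B₁ = (w−v)⁻¹ [[1,1],[−1,−1]]`. -/
noncomputable def B1mat (v w : ℝ) : Matrix (Fin 2) (Fin 2) ℝ := (w - v)⁻¹ • !![1, 1; -1, -1]

/-- `B₂ = (w−v)⁻¹ [[w,v],[−w,−v]]`. -/
noncomputable def B2mat (v w : ℝ) : Matrix (Fin 2) (Fin 2) ℝ := (w - v)⁻¹ • !![w, v; -w, -v]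

/-- `B₃ = (w−v)⁻¹ [[w²,v²],[−w²,−v²]]`. -/
noncomputable def B3mat (v w : ℝ) : Matrix (Fin 2) (Fin 2) ℝ :=
  (w - v)⁻¹ • !![w ^ 2, v ^ 2; -(w ^ 2), -(v ^ 2)]

/-- `B₄ = (w−v)⁻¹ [[vw²,v³],[−w³,−wv²]]`. -/
noncomputable def B4mat (v w : ℝ) : Matrix (Fin 2) (Fin 2) ℝ :=
  (w - v)⁻¹ • !![v * w ^ 2, v ^ 3; -(w ^ 3), -(w * v ^ 2)]

/-- `M = c₀A + c₁B₁ + c₂B₂ + c₃B₃ + c₄B₄`. -/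
noncomputable def Mmat (c0 c1 c2 c3 c4 v w : ℝ) : Matrix (Fin 2) (Fin 2) ℝ :=
  c0 • Amat v w + c1 • B1mat v w + c2 • B2mat v w + c3 • B3mat v w + c4 • B4mat v w

/-- `f₁ = −tr M`. -/
noncomputable def f1 (c0 c1 c2 c3 c4 v w : ℝ) : ℝ := -(Mmat c0 c1 c2 c3 c4 v w).trace

/-- `f₂ = det M`. -/
noncomputable def f2 (c0 c1 c2 c3 c4 v w : ℝ) : ℝ := (Mmat c0 c1 c2 c3 c4 v w).det


lemma deriv_affine (a b x : ℝ) : deriv (fun t : ℝ => a * t + b) x = a := by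
  have h : HasDerivAt (fun t : ℝ => a * t + b) a x := by
    simpa using ((hasDerivAt_id x).const_mul a).add_const b
  exact h.deriv

lemma hf1 (c0 c1 c2 c3 c4 : ℝ) {v w : ℝ} (h : v ≠ w) :
    f1 c0 c1 c2 c3 c4 v w = -(c0 * (v + w) + c2 + c3 * (v + w) + c4 * (v * w)) := by
  have hd : w - v ≠ 0 := sub_ne_zero.mpr (Ne.symm h)
  simp only [f1, Mmat, Amat, B1mat, B2mat, B3mat, B4mat, Matrix.trace_fin_two,
    Matrix.add_apply, Matrix.smul_apply, Matrix.cons_val', Matrix.cons_val_zero,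
    Matrix.cons_val_one, Matrix.head_cons, Matrix.head_fin_const, Matrix.empty_val',
    Matrix.cons_val_fin_one, smul_eq_mul, Matrix.of_apply]
  field_simp
  ring

lemma hf2 (c0 c1 c2 c3 c4 : ℝ) {v w : ℝ} (h : v ≠ w) :
    f2 c0 c1 c2 c3 c4 v w =
      c0 ^ 2 * (v * w) + c0 * c3 * (v * w) - c0 * c1 + c4 * c1 * (v + w) + c4 * c2 * (v * w) := by
  have hd : w - v ≠ 0 := sub_ne_zero.mpr (Ne.symm h)
  simp only [f2, Mmat, Amat, B1mat, B2mat, B3mat, B4mat, Matrix.det_fin_two,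
    Matrix.add_apply, Matrix.smul_apply, Matrix.cons_val', Matrix.cons_val_zero,
    Matrix.cons_val_one, Matrix.head_cons, Matrix.head_fin_const, Matrix.empty_val',
    Matrix.cons_val_fin_one, smul_eq_mul, Matrix.of_apply]
  field_simp
  ring

lemma ev_ne_left {v w : ℝ} (h : v ≠ w) : ∀ᶠ x in nhds v, x ≠ w :=
  isOpen_ne.mem_nhds h

lemma ev_ne_right {v w : ℝ} (h : v ≠ w) : ∀ᶠ x in nhds w, v ≠ x :=
  (Filter.eventually_iff_exists_mem.mpr ⟨{y | y ≠ v}, isOpen_ne.mem_nhds h.symm, fun _ hx => Ne.symm hx⟩)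

/-- For all constants `c₀,…,c₄` and every point `(v,w)` with `v ≠ w`, the matrix
`M(v,w)` satisfies the 2×2 linear degeneracy criterion
`Σ_j (∂f₁/∂u^j) M_{jk} + ∂f₂/∂u^k = 0` for `k = 1, 2`, where `(u¹,u²) = (v,w)`. -/
theorem stmt1 (c0 c1 c2 c3 c4 : ℝ) (v w : ℝ) (hvw : v ≠ w) :
    (deriv (fun v' => f1 c0 c1 c2 c3 c4 v' w) v * Mmat c0 c1 c2 c3 c4 v w 0 0 +
      deriv (fun w' => f1 c0 c1 c2 c3 c4 v w') w * Mmat c0 c1 c2 c3 c4 v w 1 0 +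
      deriv (fun v' => f2 c0 c1 c2 c3 c4 v' w) v = 0) ∧
    (deriv (fun v' => f1 c0 c1 c2 c3 c4 v' w) v * Mmat c0 c1 c2 c3 c4 v w 0 1 +
      deriv (fun w' => f1 c0 c1 c2 c3 c4 v w') w * Mmat c0 c1 c2 c3 c4 v w 1 1 +
      deriv (fun w' => f2 c0 c1 c2 c3 c4 v w') w = 0) := by

  have hd : w - v ≠ 0 := sub_ne_zero.mpr (Ne.symm hvw)
  have h1v : deriv (fun v' => f1 c0 c1 c2 c3 c4 v' w) v = -(c0 + c3 + c4 * w) := by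
    have he : (fun v' => f1 c0 c1 c2 c3 c4 v' w) =ᶠ[nhds v]
        (fun v' => (-(c0 + c3 + c4 * w)) * v' + (-(c0 * w + c2 + c3 * w))) := by
      filter_upwards [ev_ne_left hvw] with x hx
      rw [hf1 c0 c1 c2 c3 c4 hx]; ring
    rw [he.deriv_eq, deriv_affine]
  have h1w : deriv (fun w' => f1 c0 c1 c2 c3 c4 v w') w = -(c0 + c3 + c4 * v) := by
    have he : (fun w' => f1 c0 c1 c2 c3 c4 v w') =ᶠ[nhds w]
        (fun w' => (-(c0 + c3 + c4 * v)) * w' + (-(c0 * v + c2 + c3 * v))) := by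
      filter_upwards [ev_ne_right hvw] with x hx
      rw [hf1 c0 c1 c2 c3 c4 hx]; ring
    rw [he.deriv_eq, deriv_affine]
  have h2v : deriv (fun v' => f2 c0 c1 c2 c3 c4 v' w) v
      = c0 ^ 2 * w + c0 * c3 * w + c4 * c1 + c4 * c2 * w := by
    have he : (fun v' => f2 c0 c1 c2 c3 c4 v' w) =ᶠ[nhds v]
        (fun v' => (c0 ^ 2 * w + c0 * c3 * w + c4 * c1 + c4 * c2 * w) * v'
          + (-(c0 * c1) + c4 * c1 * w)) := by
      filter_upwards [ev_ne_left hvw] with x hx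
      rw [hf2 c0 c1 c2 c3 c4 hx]; ring
    rw [he.deriv_eq, deriv_affine]
  have h2w : deriv (fun w' => f2 c0 c1 c2 c3 c4 v w') w
      = c0 ^ 2 * v + c0 * c3 * v + c4 * c1 + c4 * c2 * v := by
    have he : (fun w' => f2 c0 c1 c2 c3 c4 v w') =ᶠ[nhds w]
        (fun w' => (c0 ^ 2 * v + c0 * c3 * v + c4 * c1 + c4 * c2 * v) * w'
          + (-(c0 * c1) + c4 * c1 * v)) := by
      filter_upwards [ev_ne_right hvw] with x hx
      rw [hf2 c0 c1 c2 c3 c4 hx]; ring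
    rw [he.deriv_eq, deriv_affine]
  rw [h1v, h1w, h2v, h2w]
  simp only [Mmat, Amat, B1mat, B2mat, B3mat, B4mat, Matrix.add_apply, Matrix.smul_apply,
    Matrix.cons_val', Matrix.cons_val_zero, Matrix.cons_val_one, Matrix.head_cons,
    Matrix.head_fin_const, Matrix.empty_val', Matrix.cons_val_fin_one, smul_eq_mul, Matrix.of_apply]
  constructor <;> (field_simp; ring)
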